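/- Let H be a division quaternion algebra over a field F of characteristic 2. Then every element of H is of the form (x₁x₂ − x₂x₁) + (x₃x₄ − x₄x₃)(x₅x₆ − x₆x₅) for some x₁,…,x₆ ∈ H; that is, the image on H of the polynomial p = s₂(x₁,x₂) + s₂(x₃,x₄)s₂(x₅,x₆) is all of H. -/

import Mathlib

/-- on a division quaternion algebra in characteristic 2, the image of
`p = s₂(x₁,x₂) + s₂(x₃,x₄)s₂(x₅,x₆)` is all of `H`. -/
theorem stmt_14 (F : Type*) [Field F] (hchar : ringChar F = 2)
    (H : Type*) [Ring H] [Algebra F H]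
    (i j k : H)
    (bH : Module.Basis (Fin 4) F H)
    (hbasis : bH 0 = 1 ∧ bH 1 = i ∧ bH 2 = j ∧ bH 3 = k)
    (hi : ∃ t : F, i * i + i = algebraMap F H t)
    (hj : ∃ b : F, b ≠ 0 ∧ j * j = algebraMap F H b)
    (hk : k = i * j) (hij : i * j = j * (i + 1))
    (hdiv : ∀ x : H, x ≠ 0 → IsUnit x)
    (α : H) :
    ∃ x₁ x₂ x₃ x₄ x₅ x₆ : H,
      α = (x₁ * x₂ - x₂ * x₁) + (x₃ * x₄ - x₄ * x₃) * (x₅ * x₆ - x₆ * x₅) := by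
  obtain ⟨h0, h1, h2, h3⟩ := hbasis
  obtain ⟨t, ht⟩ := hi
  obtain ⟨b, hb0, hb⟩ := hj
  haveI : CharP F 2 := hchar ▸ ringChar.charP F
  have h2F : (2 : F) = 0 := by exact_mod_cast CharP.cast_eq_zero F 2
  have h2H : (2 : H) = 0 := by
    calc (2 : H) = algebraMap F H 2 := (map_ofNat _ 2).symm
    _ = algebraMap F H 0 := by rw [h2F]
    _ = 0 := map_zero _
  have hadd : ∀ x : H, x + x = 0 := by
    intro x
    have : (2 : H) * x = 0 := by rw [h2H, zero_mul]
    rwa [two_mul] at this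
  have hsub : ∀ x y : H, x - y = x + y := by
    intro x y
    rw [sub_eq_add_neg, neg_eq_of_add_eq_zero_left (hadd y)]
  -- relations
  have hji : j * i = i * j + j := by
    rw [mul_add, mul_one] at hij
    rw [hij, add_assoc, hadd, add_zero]
  have hii : i * i = algebraMap F H t + i := by
    rw [← ht, add_assoc, hadd, add_zero]
  -- commutators
  have hc1 : i * j - j * i = j := by
    rw [hsub, hji, ← add_assoc, hadd, zero_add]
  have hik : i * k = algebraMap F H t * j + k := by
    rw [hk, ← mul_assoc, hii, add_mul]
  have hki : k * i = algebraMap F H t * j := by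
    rw [hk, mul_assoc, hji, mul_add, ← mul_assoc, hii, add_mul, add_assoc, hadd, add_zero]
  have hc2 : i * k - k * i = k := by
    rw [hsub, hik, hki, add_right_comm, hadd, zero_add]
  have hjk : j * k = i * algebraMap F H b + algebraMap F H b := by
    rw [hk, ← mul_assoc, hji, add_mul, mul_assoc, hb]
  have hkj : k * j = i * algebraMap F H b := by
    rw [hk, mul_assoc, hb]
  have hc3 : j * k - k * j = algebraMap F H b := by
    rw [hsub, hjk, hkj, add_right_comm, hadd, zero_add]
  -- bilinearity helpers
  have L2 : ∀ (r : F) (x y : H),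
      (algebraMap F H r * x) * y - y * (algebraMap F H r * x)
        = algebraMap F H r * (x * y - y * x) := by
    intro r x y
    rw [mul_sub, ← mul_assoc y, ← Algebra.commutes r y, mul_assoc, mul_assoc]
  have L2' : ∀ (r : F) (x y : H),
      x * (algebraMap F H r * y) - (algebraMap F H r * y) * x
        = algebraMap F H r * (x * y - y * x) := by
    intro r x y
    rw [mul_sub, ← mul_assoc x, ← Algebra.commutes r x, mul_assoc, mul_assoc]
  -- representation of α
  have hrep : α = algebraMap F H (bH.repr α 0) + algebraMap F H (bH.repr α 1) * i
      + algebraMap F H (bH.repr α 2) * j + algebraMap F H (bH.repr α 3) * k := by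
    conv_lhs => rw [← bH.sum_repr α]
    rw [Fin.sum_univ_four, h0, h1, h2, h3, Algebra.smul_def, Algebra.smul_def,
      Algebra.smul_def, Algebra.smul_def, mul_one]
  set a := bH.repr α 0 with ha
  set b2 := bH.repr α 1 with hb2
  set c := bH.repr α 2 with hc
  set d := bH.repr α 3 with hd
  -- the product part: [i,k] * [i, (b2/b) j] = b2 • i
  have hprod : (i * k - k * i) * (i * (algebraMap F H (b2 * b⁻¹) * j)
      - (algebraMap F H (b2 * b⁻¹) * j) * i) = algebraMap F H b2 * i := by
    rw [hc2, L2', hc1, ← mul_assoc, ← Algebra.commutes, mul_assoc, hkj, ← Algebra.commutes b i,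
      ← mul_assoc, ← map_mul, mul_assoc, inv_mul_cancel₀ hb0, mul_one]
  by_cases hd0 : d = 0
  · -- commutator part: [j, c i + (a/b) k] = c j + a
    refine ⟨j, algebraMap F H c * i + algebraMap F H (a * b⁻¹) * k, i, k, i,
      algebraMap F H (b2 * b⁻¹) * j, ?_⟩
    have hcomm : j * (algebraMap F H c * i + algebraMap F H (a * b⁻¹) * k)
        - (algebraMap F H c * i + algebraMap F H (a * b⁻¹) * k) * j
        = algebraMap F H c * j + algebraMap F H a := by
      rw [mul_add, add_mul, add_sub_add_comm, L2', L2', hc3]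
      rw [show j * i - i * j = j by rw [hsub, hji, add_right_comm, hadd, zero_add]]
      rw [← map_mul, mul_assoc, inv_mul_cancel₀ hb0, mul_one]
    rw [hcomm, hprod]
    rw [hrep, hd0, map_zero, zero_mul, add_zero]
    abel
  · refine ⟨i + algebraMap F H (a * (d * b)⁻¹) * j,
      algebraMap F H c * j + algebraMap F H d * k, i, k, i,
      algebraMap F H (b2 * b⁻¹) * j, ?_⟩
    have hcomm : (i + algebraMap F H (a * (d * b)⁻¹) * j)
          * (algebraMap F H c * j + algebraMap F H d * k)
        - (algebraMap F H c * j + algebraMap F H d * k)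
          * (i + algebraMap F H (a * (d * b)⁻¹) * j)
        = algebraMap F H a + algebraMap F H c * j + algebraMap F H d * k := by
      have expand : ∀ x y u v : H, (x + y) * (u + v) - (u + v) * (x + y)
          = (x * u - u * x) + (x * v - v * x) + ((y * u - u * y) + (y * v - v * y)) := by
        intro x y u v; noncomm_ring
      rw [expand]
      simp only [L2, L2']
      rw [hc1, hc2, hc3, sub_self, mul_zero, ← map_mul, ← map_mul,
        show a * (d * b)⁻¹ * (d * b) = a by field_simp]
      simp only [mul_zero, zero_add, add_zero]
      abel
    rw [hcomm, hprod, hrep]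
    abel
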